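/- Let V = MvPolynomial (Fin 4) ℂ ⊗_ℂ Cl, where Cl is the Clifford algebra of ℂ⁴ with quadratic form Q(v) = Σ_μ v_μ², with a_μ = ∂/∂x_μ and a_μ† = multiplication by x_μ acting on the first factor and γ_μ = ι(e_μ) acting by left multiplication on the second factor. For S one of {1,2}, {3,4}, {1,2,3,4}, define 𝒜₋^S = Σ_{μ∈S} a_μγ_μ, 𝒜₊^S = Σ_{μ∈S} a_μ†γ_μ, 𝒜₀^S = (1/2)Σ_{μ∈S} {a_μ†, a_μ}, and 𝒫^{1,2} = iγ₁γ₂, 𝒫^{3,4} = iγ₃γ₄, 𝒫^{1,2,3,4} = −γ₁γ₂γ₃γ₄. Then for each such S, the operators (𝒜₀^S, 𝒜₊^S, 𝒜₋^S, 𝒫^S) form an osp(1|2) system: {𝒜₊^S,𝒜₋^S} = 2𝒜₀^S, [𝒜₀^S,𝒜₊^S] = 𝒜₊^S, [𝒜₀^S,𝒜₋^S] = −𝒜₋^S, [𝒫^S,𝒜₀^S] = 0, {𝒫^S,𝒜₊^S} = {𝒫^S,𝒜₋^S} = 0, and (𝒫^S)² = 1. -/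

import Mathlib

noncomputable section

open scoped TensorProduct

/-- The polynomial factor `ℂ[x₁,…,x₄]`. -/
abbrev Mpoly : Type := MvPolynomial (Fin 4) ℂ

/-- The standard quadratic form `Q(v) = Σ_μ v_μ²` on `ℂ⁴`. -/
def Qform : QuadraticForm ℂ (Fin 4 → ℂ) :=
  QuadraticMap.weightedSumSquares ℂ (fun _ : Fin 4 => (1 : ℂ))

/-- The Clifford algebra of `ℂ⁴`. -/
abbrev Cl : Type := CliffordAlgebra Qform

/-- The Clifford generators `γ_μ = ι(e_μ)`. -/
def γc (μ : Fin 4) : Cl := CliffordAlgebra.ι Qform (Pi.single μ 1)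

/-- The representation space `V = ℂ[x₁,…,x₄] ⊗ Cl`. -/
abbrev V : Type := Mpoly ⊗[ℂ] Cl

/-- `a_μ = ∂/∂x_μ` acting on the first factor of `V`. -/
def aop (μ : Fin 4) : Module.End ℂ V :=
  LinearMap.rTensor Cl (MvPolynomial.pderiv μ).toLinearMap

/-- `a_μ† = x_μ·` acting on the first factor of `V`. -/
def adop (μ : Fin 4) : Module.End ℂ V :=
  LinearMap.rTensor Cl (LinearMap.mulLeft ℂ (MvPolynomial.X μ : Mpoly))

/-- `γ_μ` acting by left multiplication on the second factor of `V`. -/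
def gop (μ : Fin 4) : Module.End ℂ V :=
  LinearMap.lTensor Mpoly (LinearMap.mulLeft ℂ (γc μ))

section Aux
open LinearMap

-- Clifford relations
lemma Qform_apply (v : Fin 4 → ℂ) : Qform v = ∑ i : Fin 4, v i * v i := by
  simp [Qform, QuadraticMap.weightedSumSquares_apply]

lemma Qform_single (μ : Fin 4) : Qform (Pi.single μ 1) = 1 := by
  simp [Qform_apply, Pi.single_apply]

lemma gsqc (μ : Fin 4) : γc μ * γc μ = 1 := by
  rw [γc, CliffordAlgebra.ι_sq_scalar, Qform_single, map_one]

lemma gantic {μ ν : Fin 4} (h : μ ≠ ν) : γc μ * γc ν = -(γc ν * γc μ) := by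
  have horth : Qform.IsOrtho (Pi.single μ 1) (Pi.single ν 1) := by
    rw [QuadraticMap.isOrtho_def]
    simp [Qform_apply, Pi.single_apply, add_mul, mul_add, Finset.sum_add_distrib]
    simp [Finset.sum_ite_eq', h, Ne.symm h, mul_ite]
  have := CliffordAlgebra.ι_mul_ι_add_swap_of_isOrtho horth
  rw [γc, γc]
  rw [eq_neg_iff_add_eq_zero]
  exact this


open LinearMap

-- homomorphism helpers
lemma rT_mul (f g : Module.End ℂ Mpoly) :
    rTensor Cl (f ∘ₗ g) = rTensor Cl f * rTensor Cl g := by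
  rw [Module.End.mul_eq_comp, rTensor_comp]

lemma lT_mul (f g : Module.End ℂ Cl) :
    lTensor Mpoly (f ∘ₗ g) = lTensor Mpoly f * lTensor Mpoly g := by
  rw [Module.End.mul_eq_comp, lTensor_comp]

lemma rT_one : rTensor Cl (1 : Module.End ℂ Mpoly) = 1 := by
  rw [Module.End.one_eq_id, rTensor_id, Module.End.one_eq_id]

lemma lT_one : lTensor Mpoly (1 : Module.End ℂ Cl) = 1 := by
  rw [Module.End.one_eq_id, lTensor_id, Module.End.one_eq_id]

lemma rT_lT_comm (f : Module.End ℂ Mpoly) (g : Module.End ℂ Cl) :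
    rTensor Cl f * lTensor Mpoly g = lTensor Mpoly g * rTensor Cl f := by
  rw [Module.End.mul_eq_comp, Module.End.mul_eq_comp, rTensor_comp_lTensor, lTensor_comp_rTensor]

-- gamma operator relations
lemma gop_mul (μ ν : Fin 4) :
    gop μ * gop ν = lTensor Mpoly (mulLeft ℂ (γc μ * γc ν)) := by
  rw [gop, gop, mulLeft_mul, Module.End.mul_eq_comp, lT_mul]
  rfl

lemma gop_sq (μ : Fin 4) : gop μ * gop μ = 1 := by
  rw [gop_mul, gsqc, mulLeft_one, ← Module.End.one_eq_id, lT_one]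

lemma mulLeft_neg (x : Cl) : mulLeft ℂ (-x) = -(mulLeft ℂ x) :=
  LinearMap.ext fun y => by simp [LinearMap.mulLeft_apply]

lemma lT_neg (f : Module.End ℂ Cl) : lTensor Mpoly (-f) = -(lTensor Mpoly f) := by
  rw [show -f = (-1 : ℂ) • f by module, lTensor_smul]; module

lemma gop_anti {μ ν : Fin 4} (h : ν < μ) : gop μ * gop ν = -(gop ν * gop μ) := by
  rw [gop_mul, gop_mul, gantic h.ne', mulLeft_neg, lT_neg]

-- boson relations
lemma ccr_diag (μ : Fin 4) : aop μ * adop μ = adop μ * aop μ + 1 := by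
  rw [aop, adop, ← rT_mul, ← rT_mul, ← rT_one, ← LinearMap.rTensor_add]
  congr 1
  apply LinearMap.ext fun p => ?_
  simp [MvPolynomial.pderiv_mul]

lemma ccr_off {μ ν : Fin 4} (h : μ ≠ ν) : aop μ * adop ν = adop ν * aop μ := by
  simp only [aop, adop]
  rw [← rT_mul, ← rT_mul]
  congr 1
  apply LinearMap.ext fun p => ?_
  simp [MvPolynomial.pderiv_mul, MvPolynomial.pderiv_X_of_ne (Ne.symm h)]

lemma pderiv_comm (i j : Fin 4) (p : Mpoly) :
    MvPolynomial.pderiv i (MvPolynomial.pderiv j p)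
      = MvPolynomial.pderiv j (MvPolynomial.pderiv i p) := by
  induction p using MvPolynomial.induction_on with
  | C a => simp
  | add p q hp hq => simp [hp, hq]
  | mul_X p n hp =>
      simp only [MvPolynomial.pderiv_mul, map_add, hp]
      rcases eq_or_ne n i with rfl | hni <;> rcases eq_or_ne n j with rfl | hnj <;>
        simp [MvPolynomial.pderiv_X_of_ne, *]

lemma a_comm (μ ν : Fin 4) : aop μ * aop ν = aop ν * aop μ := by
  simp only [aop]
  rw [← rT_mul, ← rT_mul]
  exact congrArg (rTensor Cl) (LinearMap.ext fun p => pderiv_comm μ ν p)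

lemma ad_comm (μ ν : Fin 4) : adop μ * adop ν = adop ν * adop μ := by
  simp only [adop]
  rw [← rT_mul, ← rT_mul]
  congr 1
  apply LinearMap.ext fun p => ?_
  simp only [coe_comp, Function.comp_apply, mulLeft_apply]
  ring

lemma ga_comm (μ ν : Fin 4) : gop μ * aop ν = aop ν * gop μ :=
  (rT_lT_comm _ _).symm

lemma gad_comm (μ ν : Fin 4) : gop μ * adop ν = adop ν * gop μ :=
  (rT_lT_comm _ _).symm

-- primed (right-associated) versions for normalization
lemma ccr_off' {μ ν : Fin 4} (h : μ ≠ ν) (z : Module.End ℂ V) :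
    aop μ * (adop ν * z) = adop ν * (aop μ * z) := by
  rw [← mul_assoc, ccr_off h, mul_assoc]

lemma ccr_diag' (μ : Fin 4) (z : Module.End ℂ V) :
    aop μ * (adop μ * z) = adop μ * (aop μ * z) + z := by
  rw [← mul_assoc, ccr_diag, add_mul, mul_assoc, one_mul]

lemma ga_comm' (μ ν : Fin 4) (z : Module.End ℂ V) :
    gop μ * (aop ν * z) = aop ν * (gop μ * z) := by
  rw [← mul_assoc, ga_comm, mul_assoc]

lemma gad_comm' (μ ν : Fin 4) (z : Module.End ℂ V) :
    gop μ * (adop ν * z) = adop ν * (gop μ * z) := by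
  rw [← mul_assoc, gad_comm, mul_assoc]

lemma a_sort {μ ν : Fin 4} (h : ν < μ) : aop μ * aop ν = aop ν * aop μ := a_comm μ ν

lemma a_sort' {μ ν : Fin 4} (h : ν < μ) (z : Module.End ℂ V) :
    aop μ * (aop ν * z) = aop ν * (aop μ * z) := by
  rw [← mul_assoc, a_comm, mul_assoc]

lemma ad_sort {μ ν : Fin 4} (h : ν < μ) : adop μ * adop ν = adop ν * adop μ := ad_comm μ ν

lemma ad_sort' {μ ν : Fin 4} (h : ν < μ) (z : Module.End ℂ V) :
    adop μ * (adop ν * z) = adop ν * (adop μ * z) := by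
  rw [← mul_assoc, ad_comm, mul_assoc]

lemma smulc_mul (s : ℂ) (x y : Module.End ℂ V) : (s • x) * y = s • (x * y) :=
  LinearMap.ext fun v => by simp

lemma mul_smulc (s : ℂ) (x y : Module.End ℂ V) : x * (s • y) = s • (x * y) :=
  LinearMap.ext fun v => by simp

lemma smul_smulc (s t : ℂ) (x : Module.End ℂ V) : s • (t • x) = (s * t) • x :=
  LinearMap.ext fun v => by simp [mul_smul]

lemma I_mul_I' (s : ℂ) : Complex.I * (Complex.I * s) = -s := by
  rw [← mul_assoc, Complex.I_mul_I, neg_one_mul]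

lemma negc (x : Module.End ℂ V) : -x = (-1 : ℂ) • x :=
  LinearMap.ext fun v => by simp

lemma subc (x y : Module.End ℂ V) : x - y = x + (-1 : ℂ) • y :=
  LinearMap.ext fun v => by simp [sub_eq_add_neg]

lemma gop_antis {μ ν : Fin 4} (h : ν < μ) : gop μ * gop ν = (-1 : ℂ) • (gop ν * gop μ) := by
  rw [gop_anti h, negc]

lemma gop_anti' {μ ν : Fin 4} (h : ν < μ) (z : Module.End ℂ V) :
    gop μ * (gop ν * z) = (-1 : ℂ) • (gop ν * (gop μ * z)) := by
  rw [← mul_assoc, gop_antis h, smulc_mul, mul_assoc]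

lemma gop_sq' (μ : Fin 4) (z : Module.End ℂ V) : gop μ * (gop μ * z) = z := by
  rw [← mul_assoc, gop_sq, one_mul]

lemma sum_pair01 (f : Fin 4 → Module.End ℂ V) :
    ∑ μ ∈ ({0,1} : Finset (Fin 4)), f μ = f 0 + f 1 := by
  rw [Finset.sum_insert (by decide), Finset.sum_singleton]

lemma sum_pair23 (f : Fin 4 → Module.End ℂ V) :
    ∑ μ ∈ ({2,3} : Finset (Fin 4)), f μ = f 2 + f 3 := by
  rw [Finset.sum_insert (by decide), Finset.sum_singleton]

lemma sum_quad (f : Fin 4 → Module.End ℂ V) :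
    ∑ μ ∈ ({0,1,2,3} : Finset (Fin 4)), f μ = f 0 + (f 1 + (f 2 + f 3)) := by
  rw [Finset.sum_insert (by decide), Finset.sum_insert (by decide),
    Finset.sum_insert (by decide), Finset.sum_singleton]


end Aux

/-- `L_{μν} = a_μ†a_ν - a_μa_ν†`. -/
def Lop (μ ν : Fin 4) : Module.End ℂ V := adop μ * aop ν - aop μ * adop ν

/-- `Σ_{μν} = (1/2)γ_μγ_ν`. -/
def Sop (μ ν : Fin 4) : Module.End ℂ V := (2⁻¹ : ℂ) • (gop μ * gop ν)

/-- The total angular momentum `J_{μν} = -i(L_{μν} + Σ_{μν})` for `μ ≠ ν`, with the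
convention `J_{μμ} = 0`. -/
def Jop (μ ν : Fin 4) : Module.End ℂ V :=
  if μ = ν then 0 else -(Complex.I • (Lop μ ν + Sop μ ν))

/-- The Hamiltonian `H = (1/2)Σ_μ {a_μ†, a_μ}`. -/
def Hop : Module.End ℂ V :=
  (2⁻¹ : ℂ) • ∑ μ : Fin 4, (adop μ * aop μ + aop μ * adop μ)

/-- `𝒜₋^S = Σ_{μ∈S} a_μγ_μ`. -/
def AmS (S : Finset (Fin 4)) : Module.End ℂ V := ∑ μ ∈ S, aop μ * gop μ

/-- `𝒜₊^S = Σ_{μ∈S} a_μ†γ_μ`. -/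
def ApS (S : Finset (Fin 4)) : Module.End ℂ V := ∑ μ ∈ S, adop μ * gop μ

/-- `𝒜₀^S = (1/2)Σ_{μ∈S} {a_μ†, a_μ}`. -/
def A0S (S : Finset (Fin 4)) : Module.End ℂ V :=
  (2⁻¹ : ℂ) • ∑ μ ∈ S, (adop μ * aop μ + aop μ * adop μ)

/-- An `osp(1|2)` system of operators on `V`. -/
def IsOspSystem (A0 Ap Am P : Module.End ℂ V) : Prop :=
  Ap * Am + Am * Ap = 2 * A0 ∧
  A0 * Ap - Ap * A0 = Ap ∧
  A0 * Am - Am * A0 = -Am ∧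
  P * A0 - A0 * P = 0 ∧
  P * Ap + Ap * P = 0 ∧
  P * Am + Am * P = 0 ∧
  P * P = 1

set_option maxHeartbeats 2000000 in
/-- For each of `S = {1,2}`, `{3,4}`, `{1,2,3,4}`, the operators
`(𝒜₀^S, 𝒜₊^S, 𝒜₋^S, 𝒫^S)` form an `osp(1|2)` system on `V`. -/
theorem three_osp12_systems :
    IsOspSystem (A0S {0, 1}) (ApS {0, 1}) (AmS {0, 1})
      (Complex.I • (gop 0 * gop 1)) ∧
    IsOspSystem (A0S {2, 3}) (ApS {2, 3}) (AmS {2, 3})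
      (Complex.I • (gop 2 * gop 3)) ∧
    IsOspSystem (A0S {0, 1, 2, 3}) (ApS {0, 1, 2, 3}) (AmS {0, 1, 2, 3})
      (-(gop 0 * gop 1 * gop 2 * gop 3)) := by
  refine ⟨⟨?_,?_,?_,?_,?_,?_,?_⟩, ⟨?_,?_,?_,?_,?_,?_,?_⟩, ⟨?_,?_,?_,?_,?_,?_,?_⟩⟩ <;>
  · simp only [A0S, ApS, AmS, sum_pair01, sum_pair23, sum_quad, two_mul, negc, subc, mul_add, add_mul, mul_assoc, mul_one, one_mul,
    smulc_mul, mul_smulc, smul_smulc, smul_add,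
    ccr_off', ccr_diag', ga_comm', gad_comm', a_sort', ad_sort', gop_anti', gop_sq',
    ccr_off, ccr_diag, ga_comm, gad_comm, a_sort, ad_sort, gop_antis, gop_sq,
    Complex.I_mul_I, I_mul_I', ne_eq, Fin.reduceEq, Fin.reduceLT, not_false_eq_true]
    module
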